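/- arXiv:1403.0688 — 3 statements merged into one kernel-verified Lean document; each statement's English description precedes it below -/
import Mathlib

section
/- Let A be a cyclic group (finite or infinite). Then there exists a sequence (F_n) of nonempty finite subsets of A such that: (i) for every n, the set F_n contains the neutral element of A; (ii) (F_n) is a Følner sequence of A, i.e. for every g ∈ A one has |gF_n △ F_n| / |F_n| → 0 as n → ∞; and (iii) for every nonempty subset S of A and every g ∈ A, the denominators |F_n ∩ S| and |gF_n ∩ S| are nonzero for all sufficiently large n and both ratios |(gF_n △ F_n) ∩ S| / |F_n ∩ S| and |(gF_n △ F_n) ∩ S| / |gF_n ∩ S| tend to 0 as n → ∞. -/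
open scoped Pointwise
open Filter


open Filter

lemma my_aux_tendsto_div (h d : ℕ → ℕ) (C : ℕ) (hb : ∀ n, h n ≤ C)
    (hd : Tendsto (fun n => (d n : ℝ)) atTop atTop) :
    Tendsto (fun n => (h n : ℝ) / (d n : ℝ)) atTop (nhds 0) := by
  have h1 : Tendsto (fun n => (C : ℝ) / (d n : ℝ)) atTop (nhds 0) :=
    Filter.Tendsto.div_atTop tendsto_const_nhds hd
  refine tendsto_of_tendsto_of_tendsto_of_le_of_le tendsto_const_nhds h1
    (fun n => by positivity) (fun n => ?_)
  exact div_le_div_of_nonneg_right (by exact_mod_cast hb n : (h n : ℝ) ≤ (C : ℝ)) (by positivity)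
lemma my_symmdiff_subset (k n : ℤ) :
    symmDiff (Set.Icc (k - n) (k + n)) (Set.Icc (-n) n) ⊆
      Set.Ico (-n - |k|) (-n + |k|) ∪ Set.Ioc (n - |k|) (n + |k|) := by
  intro j hj
  rw [Set.mem_symmDiff] at hj
  simp only [Set.mem_Icc, Set.mem_union, Set.mem_Ico, Set.mem_Ioc] at *
  rcases abs_cases k with ⟨h1, h2⟩ | ⟨h1, h2⟩ <;> omega

lemma my_symmdiff_avoid (k n j : ℤ)
    (hj : j ∈ symmDiff (Set.Icc (k - n) (k + n)) (Set.Icc (-n) n)) :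
    j < -n + |k| ∨ n - |k| < j := by
  rw [Set.mem_symmDiff] at hj
  simp only [Set.mem_Icc] at hj
  rcases abs_cases k with ⟨h1, h2⟩ | ⟨h1, h2⟩ <;> omega

lemma my_symmdiff_card (k n : ℤ) :
    (symmDiff (Set.Icc (k - n) (k + n)) (Set.Icc (-n) n)).ncard
      ≤ (2 * |k|).toNat + (2 * |k|).toNat := by
  have hfin : (Set.Ico (-n - |k|) (-n + |k|) ∪ Set.Ioc (n - |k|) (n + |k|)).Finite :=
    (Set.finite_Ico _ _).union (Set.finite_Ioc _ _)
  refine le_trans (Set.ncard_le_ncard (my_symmdiff_subset k n) hfin)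
    (le_trans (Set.ncard_union_le _ _) ?_)
  have h1 : (Set.Ico (-n - |k|) (-n + |k|)).ncard = (2 * |k|).toNat := by
    rw [← Finset.coe_Ico, Set.ncard_coe_finset, Int.card_Ico]
    congr 1; ring
  have h2 : (Set.Ioc (n - |k|) (n + |k|)).ncard = (2 * |k|).toNat := by
    rw [← Finset.coe_Ioc, Set.ncard_coe_finset, Int.card_Ioc]
    congr 1; ring
  omega

lemma my_symmdiff_finite (k n : ℤ) :
    (symmDiff (Set.Icc (k - n) (k + n)) (Set.Icc (-n) n)).Finite :=
  ((Set.finite_Ico _ _).union (Set.finite_Ioc _ _)).subset (my_symmdiff_subset k n)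
/-- Lemma 5.1: a cyclic group admits a Følner sequence `(F n)` containing the
neutral element such that moreover, for every nonempty subset `S` and every
group element `g`, the relative ratios
`|(g F_n ∆ F_n) ∩ S| / |F_n ∩ S|` and `|(g F_n ∆ F_n) ∩ S| / |g F_n ∩ S|`
tend to `0`. -/
theorem cyclic_group_good_folner_sequence {A : Type*} [Group A] [IsCyclic A] :
    ∃ F : ℕ → Finset A,
      (∀ n, (F n).Nonempty) ∧
      (∀ n, (1 : A) ∈ F n) ∧
      (∀ g : A,
        Filter.Tendsto
          (fun n => ((symmDiff (g • (F n : Set A)) (F n : Set A)).ncard : ℝ) / ((F n).card : ℝ))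
          Filter.atTop (nhds 0)) ∧
      (∀ S : Set A, S.Nonempty → ∀ g : A,
        (∀ᶠ n in Filter.atTop, ((F n : Set A) ∩ S).ncard ≠ 0) ∧
        (∀ᶠ n in Filter.atTop, ((g • (F n : Set A)) ∩ S).ncard ≠ 0) ∧
        Filter.Tendsto
          (fun n => (((symmDiff (g • (F n : Set A)) (F n : Set A)) ∩ S).ncard : ℝ) /
            (((F n : Set A) ∩ S).ncard : ℝ))
          Filter.atTop (nhds 0) ∧
        Filter.Tendsto
          (fun n => (((symmDiff (g • (F n : Set A)) (F n : Set A)) ∩ S).ncard : ℝ) /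
            (((g • (F n : Set A)) ∩ S).ncard : ℝ))
          Filter.atTop (nhds 0)) := by
  rcases finite_or_infinite A with hA | hA
  · -- finite case : take F n = univ
    have : Fintype A := Fintype.ofFinite A
    have hs : ∀ g : A,
        symmDiff (g • ((Finset.univ : Finset A) : Set A)) ((Finset.univ : Finset A) : Set A)
          = (∅ : Set A) := by
      intro g
      rw [Finset.coe_univ, Set.smul_set_univ, symmDiff_self]
      rfl
    refine ⟨fun _ => Finset.univ, fun _ => ⟨1, Finset.mem_univ 1⟩, fun _ => Finset.mem_univ 1,
      ?_, ?_⟩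
    · intro g
      simp only [hs g, Set.ncard_empty, Nat.cast_zero, zero_div]
      exact tendsto_const_nhds
    · intro S hS g
      have hnz : ¬ S.ncard = 0 := by
        have := (Set.ncard_pos (Set.toFinite S)).mpr hS
        omega
      refine ⟨?_, ?_, ?_, ?_⟩
      · exact Eventually.of_forall fun n => by
          simpa [Finset.coe_univ, Set.univ_inter] using hnz
      · exact Eventually.of_forall fun n => by
          simpa [Finset.coe_univ, Set.smul_set_univ, Set.univ_inter] using hnz
      · simp only [hs g, Set.empty_inter, Set.ncard_empty, Nat.cast_zero, zero_div]
        exact tendsto_const_nhds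
      · simp only [hs g, Set.empty_inter, Set.ncard_empty, Nat.cast_zero, zero_div]
        exact tendsto_const_nhds
  · -- infinite case
    obtain ⟨x, hx⟩ := IsCyclic.exists_generator (α := A)
    set e : ℤ → A := fun k => x ^ k with he
    have hesurj : Function.Surjective e := fun a => Subgroup.mem_zpowers_iff.mp (hx a)
    have hnotfin : ¬ IsOfFinOrder x := by
      intro hfin
      have h1 : (Subgroup.zpowers x : Set A).Finite := finite_zpowers.mpr hfin
      have h2 : (Set.univ : Set A).Finite := h1.subset fun a _ => hx a
      exact Set.infinite_univ h2
    have heinj : Function.Injective e := injective_zpow_iff_not_isOfFinOrder.mpr hnotfin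
    have : DecidableEq A := Classical.decEq A
    set F : ℕ → Finset A := fun n => (Finset.Icc (-(n : ℤ)) n).image e with hF
    have hmem : ∀ (m : ℤ) (n : ℕ), |m| ≤ (n : ℤ) → e m ∈ F n := fun m n h =>
      Finset.mem_image_of_mem e (Finset.mem_Icc.mpr (abs_le.mp h))
    have hcoe : ∀ n : ℕ, (F n : Set A) = e '' Set.Icc (-(n : ℤ)) n := by
      intro n
      simp only [hF]
      rw [Finset.coe_image, Finset.coe_Icc]
    have hcard : ∀ n : ℕ, (F n).card = 2 * n + 1 := by
      intro n
      simp only [hF]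
      rw [Finset.card_image_of_injective _ heinj, Int.card_Icc]
      omega
    have hsmulcoe : ∀ (g : A) (k : ℤ), x ^ k = g → ∀ n : ℕ,
        g • (F n : Set A) = e '' Set.Icc (k - n) (k + n) := by
      intro g k hk n
      rw [hcoe]
      have h1 : g • (e '' Set.Icc (-(n : ℤ)) n)
          = (fun j => e (k + j)) '' Set.Icc (-(n : ℤ)) n := by
        rw [← Set.image_smul, ← Set.image_comp]
        refine congrFun (congrArg _ ?_) _
        funext j
        show g • e j = e (k + j)
        simp only [he, smul_eq_mul, ← hk, ← zpow_add]
      rw [h1, show (fun j => e (k + j)) = e ∘ (fun j => k + j) from rfl, Set.image_comp,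
        Set.image_const_add_Icc]
      congr 1 <;> ring
    have hsym : ∀ (g : A) (k : ℤ), x ^ k = g → ∀ n : ℕ,
        symmDiff (g • (F n : Set A)) (F n : Set A)
          = e '' symmDiff (Set.Icc (k - n) (k + n)) (Set.Icc (-(n : ℤ)) n) := by
      intro g k hk n
      rw [hsmulcoe g k hk n, hcoe n, Set.image_symmDiff heinj]
    refine ⟨F, fun n => ⟨e 0, hmem 0 n (by simp)⟩, fun n => by
        simpa [he] using hmem 0 n (by simp), ?_, ?_⟩
    · -- Følner property
      intro g
      obtain ⟨k, hk⟩ := Subgroup.mem_zpowers_iff.mp (hx g)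
      refine my_aux_tendsto_div _ _ ((2 * |k|).toNat + (2 * |k|).toNat) (fun n => ?_) ?_
      · rw [hsym g k hk n, Set.ncard_image_of_injective _ heinj]
        exact my_symmdiff_card k n
      · refine tendsto_natCast_atTop_atTop.comp ?_
        exact tendsto_atTop_mono (f := fun n : ℕ => n)
          (fun n => le_trans (by omega : n ≤ 2 * n + 1) (le_of_eq (hcard n).symm)) tendsto_id
    · -- relative Følner property
      intro S hS g
      obtain ⟨k, hk⟩ := Subgroup.mem_zpowers_iff.mp (hx g)
      set T : Set ℤ := e ⁻¹' S with hT
      have hFS : ∀ n : ℕ, ((F n : Set A) ∩ S).ncard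
          = (Set.Icc (-(n : ℤ)) n ∩ T).ncard := by
        intro n
        rw [hcoe n, ← Set.image_inter_preimage e _ S, Set.ncard_image_of_injective _ heinj]
      have hgFS : ∀ n : ℕ, ((g • (F n : Set A)) ∩ S).ncard
          = (Set.Icc (k - n) (k + n) ∩ T).ncard := by
        intro n
        rw [hsmulcoe g k hk n, ← Set.image_inter_preimage e _ S,
          Set.ncard_image_of_injective _ heinj]
      have hsymS : ∀ n : ℕ, ((symmDiff (g • (F n : Set A)) (F n : Set A)) ∩ S).ncard
          = (symmDiff (Set.Icc (k - n) (k + n)) (Set.Icc (-(n : ℤ)) n) ∩ T).ncard := by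
        intro n
        rw [hsym g k hk n, ← Set.image_inter_preimage e _ S,
          Set.ncard_image_of_injective _ heinj]
      obtain ⟨s, hsS⟩ := hS
      obtain ⟨m, hm⟩ := hesurj s
      have hmT : m ∈ T := by rw [hT, Set.mem_preimage, hm]; exact hsS
      have hnonzero : ∀ c : ℤ, ∀ᶠ n : ℕ in atTop, (Set.Icc (c - n) (c + n) ∩ T).ncard ≠ 0 := by
        intro c
        rw [eventually_atTop]
        refine ⟨(|m - c|).toNat, fun n hn => ?_⟩
        have hmn : c - n ≤ m ∧ m ≤ c + n := by
          rcases abs_cases (m - c) with ⟨h1, h2⟩ | ⟨h1, h2⟩ <;> omega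
        have hne : (Set.Icc (c - (n : ℤ)) (c + n) ∩ T).Nonempty :=
          ⟨m, Set.mem_Icc.mpr hmn, hmT⟩
        have hfin : (Set.Icc (c - (n : ℤ)) (c + n) ∩ T).Finite :=
          (Set.finite_Icc _ _).inter_of_left _
        exact ((Set.ncard_pos hfin).mpr hne).ne'
      have h0icc : ∀ n : ℕ, Set.Icc ((0 : ℤ) - n) ((0 : ℤ) + n) = Set.Icc (-(n : ℤ)) n := by
        intro n; congr 1 <;> ring
      have hratio : ∀ c : ℤ, Tendsto (fun n : ℕ =>
          ((symmDiff (Set.Icc (k - n) (k + n)) (Set.Icc (-(n : ℤ)) n) ∩ T).ncard : ℝ) /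
            ((Set.Icc (c - n) (c + n) ∩ T).ncard : ℝ)) atTop (nhds 0) := by
        intro c
        by_cases hTfin : T.Finite
        · -- numerator eventually 0
          obtain ⟨a, ha⟩ := hTfin.bddAbove
          obtain ⟨b, hb⟩ := hTfin.bddBelow
          have hev : ∀ᶠ n : ℕ in atTop,
              (symmDiff (Set.Icc (k - n) (k + n)) (Set.Icc (-(n : ℤ)) n) ∩ T) = ∅ := by
            rw [eventually_atTop]
            refine ⟨(|a| + |b| + |k| + 1).toNat, fun n hn => ?_⟩
            have hn' : |a| + |b| + |k| + 1 ≤ (n : ℤ) := by omega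
            ext j
            simp only [Set.mem_inter_iff, Set.mem_empty_iff_false, iff_false, not_and]
            intro hj hjT
            have h1 := my_symmdiff_avoid k n j hj
            have h2 : j ≤ a := ha hjT
            have h3 : b ≤ j := hb hjT
            have h4 : a ≤ |a| := le_abs_self a
            have h5 : -|b| ≤ b := neg_abs_le b
            have h6 : 0 ≤ |k| := abs_nonneg k
            have h7 : 0 ≤ |a| := abs_nonneg a
            have h8 : 0 ≤ |b| := abs_nonneg b
            omega
          have hev0 : (fun n : ℕ =>
              ((symmDiff (Set.Icc (k - n) (k + n)) (Set.Icc (-(n : ℤ)) n) ∩ T).ncard : ℝ) /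
                ((Set.Icc (c - n) (c + n) ∩ T).ncard : ℝ)) =ᶠ[atTop] (fun _ => (0 : ℝ)) :=
            hev.mono fun n hn => by simp [hn]
          exact Tendsto.congr' hev0.symm tendsto_const_nhds
        · -- T infinite : denominator tends to infinity
          have hTinf : T.Infinite := hTfin
          have hgrow :
              Tendsto (fun n : ℕ => ((Set.Icc (c - n) (c + n) ∩ T).ncard : ℝ)) atTop atTop := by
            refine tendsto_natCast_atTop_atTop.comp ?_
            rw [tendsto_atTop]
            intro N
            obtain ⟨T', hT'sub, hT'fin, hT'card⟩ := hTinf.exists_subset_ncard_eq N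
            obtain ⟨a, ha⟩ := hT'fin.bddAbove
            obtain ⟨b, hb⟩ := hT'fin.bddBelow
            rw [eventually_atTop]
            refine ⟨(|a| + |b| + |c|).toNat, fun n hn => ?_⟩
            have hn' : |a| + |b| + |c| ≤ (n : ℤ) := by omega
            have hsub : T' ⊆ Set.Icc (c - n) (c + n) ∩ T := by
              intro j hj
              have h2 : j ≤ a := ha hj
              have h3 : b ≤ j := hb hj
              have h4 : a ≤ |a| := le_abs_self a
              have h5 : -|b| ≤ b := neg_abs_le b
              have h6 : -|c| ≤ c ∧ c ≤ |c| := ⟨neg_abs_le c, le_abs_self c⟩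
              have h7 : 0 ≤ |a| := abs_nonneg a
              have h8 : 0 ≤ |b| := abs_nonneg b
              have h9 : 0 ≤ |c| := abs_nonneg c
              exact ⟨Set.mem_Icc.mpr (by omega), hT'sub hj⟩
            calc N = T'.ncard := hT'card.symm
              _ ≤ _ := Set.ncard_le_ncard hsub ((Set.finite_Icc _ _).inter_of_left _)
          exact my_aux_tendsto_div
            (fun n => (symmDiff (Set.Icc (k - n) (k + n)) (Set.Icc (-(n : ℤ)) n) ∩ T).ncard)
            (fun n => (Set.Icc (c - n) (c + n) ∩ T).ncard)
            ((2 * |k|).toNat + (2 * |k|).toNat)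
            (fun n => le_trans (Set.ncard_le_ncard Set.inter_subset_left
              (my_symmdiff_finite k n)) (my_symmdiff_card k n))
            hgrow
      refine ⟨?_, ?_, ?_, ?_⟩
      · refine (hnonzero 0).mono fun n hn => ?_
        rw [hFS n, ← h0icc n]; exact hn
      · refine (hnonzero k).mono fun n hn => ?_
        rw [hgFS n]; exact hn
      · refine (hratio 0).congr fun n => ?_
        rw [hsymS n, hFS n, h0icc n]
      · refine (hratio k).congr fun n => ?_
        rw [hsymS n, hgFS n]
end

section
/- For n ∈ ℕ let F_n denote the set of integers of absolute value at most n, i.e. F_n = {k ∈ ℤ : -n ≤ k ≤ n}. Then for every m ∈ ℤ and every nonempty subset S ⊆ ℤ: the cardinalities |F_n ∩ S| and |(m + F_n) ∩ S| are nonzero for all sufficiently large n, and both ratios |((m + F_n) △ F_n) ∩ S| / |F_n ∩ S| and |((m + F_n) △ F_n) ∩ S| / |(m + F_n) ∩ S| tend to 0 as n → ∞. -/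
open scoped Pointwise

private lemma int_vadd_Icc (m a b : ℤ) : m +ᵥ Set.Icc a b = Set.Icc (m + a) (m + b) := by
  ext x
  simp only [Set.mem_vadd_set, Set.mem_Icc, vadd_eq_add]
  constructor
  · rintro ⟨y, ⟨h1, h2⟩, rfl⟩; omega
  · intro h; exact ⟨x - m, by omega, by omega⟩

private lemma ratio_tendsto_zero (f g : ℕ → ℕ) (C : ℕ) (hf : ∀ n, f n ≤ C)
    (hg : Filter.Tendsto g Filter.atTop Filter.atTop) :
    Filter.Tendsto (fun n => (f n : ℝ) / (g n : ℝ)) Filter.atTop (nhds 0) := by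
  have h0 : Filter.Tendsto (fun n : ℕ => (C : ℝ) / (n : ℝ)) Filter.atTop (nhds 0) :=
    tendsto_const_div_atTop_nhds_zero_nat (C : ℝ)
  have hC := h0.comp hg
  refine squeeze_zero (fun n => by positivity) (fun n => ?_) hC
  show (f n : ℝ) / (g n : ℝ) ≤ (C : ℝ) / (g n : ℝ)
  rcases Nat.eq_zero_or_pos (g n) with h | h
  · simp [h]
  · have hg0 : (0 : ℝ) < (g n : ℝ) := by exact_mod_cast h
    have : (f n : ℝ) ≤ C := by exact_mod_cast hf n
    gcongr

/-- The integer case of the Følner lemma (Lemma 5.1), with `F n = [-n, n] ⊆ ℤ`: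
for every `m : ℤ` and every nonempty `S ⊆ ℤ`, the cardinalities
`|F_n ∩ S|` and `|(m + F_n) ∩ S|` are eventually nonzero and the ratios
`|((m + F_n) ∆ F_n) ∩ S| / |F_n ∩ S|` and `|((m + F_n) ∆ F_n) ∩ S| / |(m + F_n) ∩ S|`
tend to `0`. -/
theorem int_interval_folner (m : ℤ) (S : Set ℤ) (hS : S.Nonempty) :
    (∀ᶠ n : ℕ in Filter.atTop, (Set.Icc (-(n : ℤ)) n ∩ S).ncard ≠ 0) ∧
    (∀ᶠ n : ℕ in Filter.atTop, ((m +ᵥ Set.Icc (-(n : ℤ)) n) ∩ S).ncard ≠ 0) ∧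
    Filter.Tendsto
      (fun n : ℕ =>
        (((symmDiff (m +ᵥ Set.Icc (-(n : ℤ)) n) (Set.Icc (-(n : ℤ)) n)) ∩ S).ncard : ℝ) /
          ((Set.Icc (-(n : ℤ)) n ∩ S).ncard : ℝ))
      Filter.atTop (nhds 0) ∧
    Filter.Tendsto
      (fun n : ℕ =>
        (((symmDiff (m +ᵥ Set.Icc (-(n : ℤ)) n) (Set.Icc (-(n : ℤ)) n)) ∩ S).ncard : ℝ) /
          (((m +ᵥ Set.Icc (-(n : ℤ)) n) ∩ S).ncard : ℝ))
      Filter.atTop (nhds 0) := by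
  obtain ⟨s, hs⟩ := hS
  set k : ℕ := m.natAbs with hk
  have hkm : (k : ℤ) = |m| := Int.abs_eq_natAbs m ▸ rfl
  have hvadd : ∀ n : ℕ, m +ᵥ Set.Icc (-(n : ℤ)) n = Set.Icc (m + -(n : ℤ)) (m + n) :=
    fun n => int_vadd_Icc m _ _
  have hfin1 : ∀ n : ℕ, (Set.Icc (-(n : ℤ)) n ∩ S).Finite :=
    fun n => (Set.finite_Icc _ _).inter_of_left S
  have hfin2 : ∀ n : ℕ, ((m +ᵥ Set.Icc (-(n : ℤ)) n) ∩ S).Finite := by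
    intro n; rw [hvadd]; exact (Set.finite_Icc _ _).inter_of_left S
  -- numerator set and its bounds
  set N : ℕ → Set ℤ :=
    fun n => (symmDiff (m +ᵥ Set.Icc (-(n : ℤ)) n) (Set.Icc (-(n : ℤ)) n)) ∩ S with hN
  have hNsub : ∀ n : ℕ, N n ⊆
      Set.Icc (-(n : ℤ) - k) ((n : ℤ) + k) \ Set.Icc (-(n : ℤ) + k) ((n : ℤ) - k) := by
    intro n x hx
    obtain ⟨hx1, _⟩ := hx
    rw [hvadd, Set.mem_symmDiff] at hx1
    simp only [Set.mem_Icc] at hx1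
    simp only [Set.mem_diff, Set.mem_Icc]
    have : |m| ≤ (k : ℤ) := hkm.ge
    have : -(k : ℤ) ≤ m := by omega
    omega
  have hNfin : ∀ n : ℕ, (N n).Finite :=
    fun n => (Set.finite_Icc _ _).diff.subset (hNsub n)
  have hNcard : ∀ n : ℕ, (N n).ncard ≤ 4 * k := by
    intro n
    refine le_trans (Set.ncard_le_ncard (hNsub n) (Set.finite_Icc _ _).diff) ?_
    have hco : Set.Icc (-(n : ℤ) - k) ((n : ℤ) + k) \ Set.Icc (-(n : ℤ) + k) ((n : ℤ) - k)
        = ↑(Finset.Icc (-(n : ℤ) - k) ((n : ℤ) + k) \ Finset.Icc (-(n : ℤ) + k) ((n : ℤ) - k)) := by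
      rw [Finset.coe_sdiff, Finset.coe_Icc, Finset.coe_Icc]
    rw [hco, Set.ncard_coe_finset]
    have hsub : Finset.Icc (-(n : ℤ) + k) ((n : ℤ) - k) ⊆
        Finset.Icc (-(n : ℤ) - k) ((n : ℤ) + k) :=
      Finset.Icc_subset_Icc (by omega) (by omega)
    rw [Finset.card_sdiff_of_subset hsub, Int.card_Icc, Int.card_Icc]
    omega
  refine ⟨?_, ?_, ?_, ?_⟩
  · filter_upwards [Filter.eventually_ge_atTop s.natAbs] with n hn
    have hn' : (s.natAbs : ℤ) ≤ n := by exact_mod_cast hn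
    have : s ∈ Set.Icc (-(n : ℤ)) n ∩ S := ⟨by simp only [Set.mem_Icc]; omega, hs⟩
    exact ((Set.ncard_pos (hfin1 n)).mpr ⟨s, this⟩).ne'
  · filter_upwards [Filter.eventually_ge_atTop (s - m).natAbs] with n hn
    have hn' : ((s - m).natAbs : ℤ) ≤ n := by exact_mod_cast hn
    have : s ∈ (m +ᵥ Set.Icc (-(n : ℤ)) n) ∩ S := by
      rw [hvadd]
      exact ⟨by simp only [Set.mem_Icc]; omega, hs⟩
    exact ((Set.ncard_pos (hfin2 n)).mpr ⟨s, this⟩).ne'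
  all_goals {
    rcases Set.finite_or_infinite S with hSf | hSf
    · -- finite case: the numerator is eventually zero
      have hM : ∀ x ∈ S, x.natAbs ≤ hSf.toFinset.sup Int.natAbs := by
        intro x hx
        exact Finset.le_sup (f := Int.natAbs) (hSf.mem_toFinset.mpr hx)
      set M := hSf.toFinset.sup Int.natAbs with hMdef
      have hev : ∀ᶠ n : ℕ in Filter.atTop, N n = ∅ := by
        filter_upwards [Filter.eventually_ge_atTop (M + k)] with n hn
        rw [Set.eq_empty_iff_forall_notMem]
        intro x hx
        have h1 := hNsub n hx
        have h2 : x.natAbs ≤ M := hM x hx.2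
        have h2' : (x.natAbs : ℤ) ≤ M := by exact_mod_cast h2
        have hn' : (M : ℤ) + k ≤ n := by exact_mod_cast hn
        simp only [Set.mem_diff, Set.mem_Icc] at h1
        omega
      refine Filter.Tendsto.congr' ?_ tendsto_const_nhds
      filter_upwards [hev] with n hn
      have hn' : (symmDiff (m +ᵥ Set.Icc (-(n : ℤ)) n) (Set.Icc (-(n : ℤ)) n)) ∩ S = ∅ := hn
      simp only [hn', Set.ncard_empty, Nat.cast_zero, zero_div]
    · -- infinite case: the denominator tends to infinity
      have ha : Filter.Tendsto (fun n : ℕ => (Set.Icc (-(n : ℤ)) n ∩ S).ncard)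
          Filter.atTop Filter.atTop := by
        rw [Filter.tendsto_atTop_atTop]
        intro b
        obtain ⟨t, hts, htc⟩ := hSf.exists_subset_card_eq b
        refine ⟨t.sup Int.natAbs, fun n hn => ?_⟩
        have hsub : (↑t : Set ℤ) ⊆ Set.Icc (-(n : ℤ)) n ∩ S := by
          intro x hx
          have h1 : x.natAbs ≤ t.sup Int.natAbs := Finset.le_sup hx
          have h2 : (x.natAbs : ℤ) ≤ n := by exact_mod_cast h1.trans hn
          exact ⟨by simp only [Set.mem_Icc]; omega, hts hx⟩
        calc b = t.card := htc.symm
          _ = (↑t : Set ℤ).ncard := (Set.ncard_coe_finset t).symm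
          _ ≤ _ := Set.ncard_le_ncard hsub (hfin1 n)
      first
      | exact ratio_tendsto_zero _ _ (4 * k) hNcard ha
      | · -- second ratio: denominator ≥ |Icc(-(n-k), n-k) ∩ S|
          have hb : Filter.Tendsto (fun n : ℕ => ((m +ᵥ Set.Icc (-(n : ℤ)) n) ∩ S).ncard)
              Filter.atTop Filter.atTop := by
            refine Filter.tendsto_atTop_mono' _ ?_
              (ha.comp (Filter.tendsto_sub_atTop_nat k))
            filter_upwards [Filter.eventually_ge_atTop k] with n hn
            refine Set.ncard_le_ncard ?_ (hfin2 n)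
            rintro x ⟨hx1, hx2⟩
            rw [hvadd]
            simp only [Set.mem_Icc] at hx1
            have h1 : ((n - k : ℕ) : ℤ) = (n : ℤ) - k := by
              have : k ≤ n := hn; push_cast [this]; ring
            have : |m| ≤ (k : ℤ) := hkm.ge
            have : -(k : ℤ) ≤ m := by omega
            refine ⟨Set.mem_Icc.mpr ⟨?_, ?_⟩, hx2⟩ <;> omega
          exact ratio_tendsto_zero _ _ (4 * k) hNcard hb
  }
end

section
/- Let G be a countable group with a measurable measure-preserving action on a standard probability space (X, μ) (a p.m.p. action). Let φ : G × X → ℂ be a function such that for each γ ∈ G the function x ↦ φ(γ, x) is measurable and |φ(γ, x)| ≤ 1 for μ-a.e. x, and suppose φ is positive definite on the translation groupoid G ⋉ X, i.e. for μ-a.e. x ∈ X, for every n ∈ ℕ, every γ₁, …, γ_n ∈ G and every λ₁, …, λ_n ∈ ℂ, the sum Σ_{i,j=1}^n conj(λ_i) · λ_j · φ(γ_i⁻¹ γ_j, γ_j⁻¹ · x) is a nonnegative real number. Define the averaged function φ̄ : G → ℂ by φ̄(γ) = ∫_X φ(γ, x) dμ(x). Then φ̄ is a positive definite function on G, i.e.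 for every n ∈ ℕ, every γ₁, …, γ_n ∈ G and every λ₁, …, λ_n ∈ ℂ, the sum Σ_{i,j=1}^n conj(λ_i) · λ_j · φ̄(γ_i⁻¹ γ_j) is a nonnegative real number; moreover if φ(e, x) = 1 for μ-a.e. x (e the neutral element of G), then φ̄(e) = 1. -/
open scoped ComplexOrder
open MeasureTheory

/-- Averaging a positive definite function on the translation groupoid `G ⋉ X`
of a p.m.p. action yields a positive definite function on `G`; it is
normalized if the groupoid function is normalized. -/
theorem averaged_positive_definite {G : Type*} [Group G] [Countable G]
    {X : Type*} [MeasurableSpace X] [StandardBorelSpace X]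
    (μ : MeasureTheory.Measure X) [MeasureTheory.IsProbabilityMeasure μ]
    [MulAction G X]
    (hmeas : ∀ γ : G, Measurable (fun x : X => γ • x))
    (hpmp : ∀ γ : G, MeasureTheory.MeasurePreserving (fun x : X => γ • x) μ μ)
    (φ : G × X → ℂ)
    (hφmeas : ∀ γ : G, Measurable (fun x : X => φ (γ, x)))
    (hφbd : ∀ γ : G, ∀ᵐ x ∂μ, ‖φ (γ, x)‖ ≤ 1)
    (hφpd : ∀ᵐ x ∂μ, ∀ n : ℕ, ∀ γ : Fin n → G, ∀ lam : Fin n → ℂ,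
      0 ≤ ∑ i, ∑ j, (starRingEnd ℂ) (lam i) * lam j * φ ((γ i)⁻¹ * γ j, (γ j)⁻¹ • x)) :
    (∀ n : ℕ, ∀ γ : Fin n → G, ∀ lam : Fin n → ℂ,
      0 ≤ ∑ i, ∑ j, (starRingEnd ℂ) (lam i) * lam j * ∫ x, φ ((γ i)⁻¹ * γ j, x) ∂μ) ∧
    ((∀ᵐ x ∂μ, φ (1, x) = 1) → (∫ x, φ (1, x) ∂μ) = 1) := by
  have hint : ∀ γ : G, Integrable (fun x => φ (γ, x)) μ := by
    intro γ
    refine Integrable.mono' (integrable_const (1 : ℝ)) (hφmeas γ).aestronglyMeasurable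
      ((hφbd γ).mono fun x hx => ?_)
    simpa using hx
  constructor
  · intro n γ lam
    -- change of variables
    have key : ∀ i j : Fin n, (∫ x, φ ((γ i)⁻¹ * γ j, x) ∂μ)
        = ∫ x, φ ((γ i)⁻¹ * γ j, (γ j)⁻¹ • x) ∂μ := by
      intro i j
      exact ((hpmp (γ j)⁻¹).integral_comp
        ((hmeas ((γ j)⁻¹ : G)).measurableEmbedding (MulAction.injective _))
        (fun x => φ ((γ i)⁻¹ * γ j, x))).symm
    have hsum : (∑ i, ∑ j, (starRingEnd ℂ) (lam i) * lam j * ∫ x, φ ((γ i)⁻¹ * γ j, x) ∂μ)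
        = ∫ x, ∑ i, ∑ j, (starRingEnd ℂ) (lam i) * lam j * φ ((γ i)⁻¹ * γ j, (γ j)⁻¹ • x) ∂μ := by
      rw [integral_finset_sum]
      · refine Finset.sum_congr rfl fun i _ => ?_
        rw [integral_finset_sum]
        · refine Finset.sum_congr rfl fun j _ => ?_
          rw [key i j, integral_const_mul]
        · intro j _
          exact (((hpmp (γ j)⁻¹).integrable_comp
            (hint _).aestronglyMeasurable).mpr (hint _)).const_mul _
      · intro i _
        exact integrable_finset_sum _ fun j _ =>
          (((hpmp (γ j)⁻¹).integrable_comp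
            (hint _).aestronglyMeasurable).mpr (hint _)).const_mul _
    rw [hsum]
    set F : X → ℂ := fun x => ∑ i, ∑ j, (starRingEnd ℂ) (lam i) * lam j *
      φ ((γ i)⁻¹ * γ j, (γ j)⁻¹ • x) with hF
    have hFint : Integrable F μ := integrable_finset_sum _ fun i _ =>
      integrable_finset_sum _ fun j _ =>
        (((hpmp (γ j)⁻¹).integrable_comp
          (hint _).aestronglyMeasurable).mpr (hint _)).const_mul _
    have hFnn : ∀ᵐ x ∂μ, 0 ≤ F x := hφpd.mono fun x hx => hx n γ lam
    have hreal : ∫ x, F x ∂μ = ((∫ x, (F x).re ∂μ : ℝ) : ℂ) :=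
      calc ∫ x, F x ∂μ = ∫ x, ((F x).re : ℂ) ∂μ := by
            refine integral_congr_ae (hFnn.mono fun x hx => ?_)
            obtain ⟨h1, h2⟩ := Complex.nonneg_iff.mp hx
            exact Complex.ext (by simp) (by simp [← h2])
        _ = ((∫ x, (F x).re ∂μ : ℝ) : ℂ) := integral_ofReal
    rw [hreal, Complex.zero_le_real]
    refine integral_nonneg_of_ae (hFnn.mono fun x hx => (Complex.nonneg_iff.mp hx).1)
  · intro h1
    rw [integral_congr_ae (h1.mono fun x hx => hx)]
    simp
end
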